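/- (Congruity of the r-csmGmm on same-signed vectors.) Under any r-csmGmm, if z, z' ∈ ℝ^K have all coordinates positive and z_k ≥ z'_k for every k, then lfdr^rep(z) ≤ lfdr^rep(z'); likewise, if z, z' have all coordinates negative and z_k ≤ z'_k for every k, then lfdr^rep(z) ≤ lfdr^rep(z'). In other words, among vectors whose coordinates all share a common sign, a componentwise more extreme vector never receives a strictly larger replication local false discovery rate. -/

import Mathlib

noncomputable section

open Finset

/-- The standard normal density `φ(x) = (2π)^{-1/2} exp(-x²/2)`. -/
def stdNormal (x : ℝ) : ℝ := (Real.sqrt (2 * Real.pi))⁻¹ * Real.exp (-(x ^ 2) / 2)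

/-- Sign value encoded by a ternary digit: `0 ↦ -1`, `1 ↦ 0`, `2 ↦ 1`. -/
def sgnVal (i : Fin 3) : ℝ := (i : ℝ) - 1

/-- The non-null pattern (binary representation) of an association configuration:
`pat h k = true` iff dimension `k` is non-null. -/
def pat {K : ℕ} (h : Fin K → Fin 3) : Fin K → Bool := fun k => h k != 1

/-- A conditionally symmetric multidimensional Gaussian mixture model (csmGmm).
Parameters are indexed by the non-null pattern `β : Fin K → Bool`, which is
equivalent to the binary representation `b ∈ {0,…,2^K - 1}`; the all-`true`
pattern corresponds to `b = 2^K - 1`. -/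
structure CsmGmm (K : ℕ) where
  /-- number of mean-magnitude vectors for each binary representation -/
  M : (Fin K → Bool) → ℕ
  M_pos : ∀ β, 1 ≤ M β
  /-- mixing proportions, shared by configurations with the same binary representation -/
  pi : (β : Fin K → Bool) → Fin (M β) → ℝ
  pi_pos : ∀ β m, 0 < pi β m
  pi_sum : ∑ h : Fin K → Fin 3, ∑ m : Fin (M (pat h)), pi (pat h) m = 1
  /-- mean magnitudes -/
  mu : (β : Fin K → Bool) → Fin (M β) → Fin K → ℝ
  mu_null : ∀ β m k, β k = false → mu β m k = 0
  mu_pos : ∀ β m k, β k = true → 0 < mu β m k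
  mu_alt : ∀ β (m' : Fin (M β)) (m : Fin (M (fun _ => true))) k,
    β ≠ (fun _ => true) → β k = true → mu β m' k ≤ mu (fun _ => true) m k

namespace CsmGmm

variable {K : ℕ}

/-- The numerator `N(z)`: mixture mass over composite-null configurations
(those with at least one null dimension, i.e. some `h k = 0`, encoded by digit `1`). -/
def N (G : CsmGmm K) (z : Fin K → ℝ) : ℝ :=
  ∑ h ∈ Finset.univ.filter (fun h : Fin K → Fin 3 => ∃ k, h k = 1),
    ∑ m : Fin (G.M (pat h)),
      G.pi (pat h) m * ∏ k, stdNormal (z k - sgnVal (h k) * G.mu (pat h) m k)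

/-- The denominator `D(z)`: the full mixture density. -/
def D (G : CsmGmm K) (z : Fin K → ℝ) : ℝ :=
  ∑ h : Fin K → Fin 3,
    ∑ m : Fin (G.M (pat h)),
      G.pi (pat h) m * ∏ k, stdNormal (z k - sgnVal (h k) * G.mu (pat h) m k)

/-- The local false discovery rate `lfdr(z) = N(z)/D(z)`. -/
def lfdr (G : CsmGmm K) (z : Fin K → ℝ) : ℝ := G.N z / G.D z

end CsmGmm

end

noncomputable section

namespace CsmGmm

variable {K : ℕ}

/-- The replication numerator `N^rep(z)`: mixture mass over the replication null
space `H₀^rep = {-1,0,1}^K \ {(1,…,1), (-1,…,-1)}` (digit `2` encodes `1` and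
digit `0` encodes `-1`). -/
def Nrep (G : CsmGmm K) (z : Fin K → ℝ) : ℝ :=
  ∑ h ∈ Finset.univ.filter
      (fun h : Fin K → Fin 3 => h ≠ (fun _ => 2) ∧ h ≠ (fun _ => 0)),
    ∑ m : Fin (G.M (pat h)),
      G.pi (pat h) m * ∏ k, stdNormal (z k - sgnVal (h k) * G.mu (pat h) m k)

/-- The replication local false discovery rate `lfdr^rep(z) = N^rep(z)/D(z)`. -/
def lfdrRep (G : CsmGmm K) (z : Fin K → ℝ) : ℝ := G.Nrep z / G.D z

end CsmGmm

end

noncomputable section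
namespace RcsmAux

open Finset

variable {K : ℕ}

lemma stdNormal_pos (x : ℝ) : 0 < stdNormal x := by
  unfold stdNormal
  have h2 : (0:ℝ) < 2 * Real.pi := by positivity
  exact mul_pos (inv_pos.mpr (Real.sqrt_pos.mpr h2)) (Real.exp_pos _)

/-! ### Fin 3 facts -/

def negh (h : Fin K → Fin 3) : Fin K → Fin 3 := fun k => 2 - h k

lemma fin3_invol : ∀ i : Fin 3, (2:Fin 3) - (2 - i) = i := by decide

lemma negh_invol (h : Fin K → Fin 3) : negh (negh h) = h := by
  funext k; exact fin3_invol (h k)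

lemma pat_negh (h : Fin K → Fin 3) : pat (negh h) = pat h := by
  funext k
  have : ∀ i : Fin 3, (((2:Fin 3) - i) != 1) = (i != 1) := by decide
  exact this (h k)

lemma sgnVal_neg : ∀ i : Fin 3, sgnVal (2 - i) = - sgnVal i := by
  intro i; fin_cases i <;> norm_num [sgnVal, Fin.sub_def]

lemma abs_sgnVal : ∀ i : Fin 3, |sgnVal i| ≤ 1 := by
  intro i; fin_cases i <;> norm_num [sgnVal]

lemma sgnVal_two : sgnVal 2 = 1 := by norm_num [sgnVal]
lemma sgnVal_zero : sgnVal 0 = -1 := by norm_num [sgnVal]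

/-! ### basic defs -/

def S (K : ℕ) : Finset (Fin K → Fin 3) :=
  Finset.univ.filter (fun h : Fin K → Fin 3 => h ≠ (fun _ => 2) ∧ h ≠ (fun _ => 0))

def termP (w c : Fin K → ℝ) : ℝ := ∏ k, stdNormal (w k - c k)

def tsum (G : CsmGmm K) (h : Fin K → Fin 3) (w : Fin K → ℝ) : ℝ :=
  ∑ m : Fin (G.M (pat h)),
    G.pi (pat h) m * ∏ k, stdNormal (w k - sgnVal (h k) * G.mu (pat h) m k)

def mbar (G : CsmGmm K) : Fin (G.M (fun _ => true)) := ⟨0, G.M_pos _⟩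
def mubar (G : CsmGmm K) : Fin K → ℝ := G.mu (fun _ => true) (mbar G)
def pibar (G : CsmGmm K) : ℝ := G.pi (fun _ => true) (mbar G)
def Abar (G : CsmGmm K) (w : Fin K → ℝ) : ℝ :=
  pibar G * (termP w (mubar G) + termP w (fun k => -(mubar G k)))

lemma Nrep_eq (G : CsmGmm K) (z : Fin K → ℝ) : G.Nrep z = ∑ h ∈ S K, tsum G h z := rfl

lemma D_eq (G : CsmGmm K) (z : Fin K → ℝ) : G.D z = ∑ h : Fin K → Fin 3, tsum G h z := rfl

lemma termP_pos (w c : Fin K → ℝ) : 0 < termP w c :=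
  Finset.prod_pos fun k _ => stdNormal_pos _

lemma tsum_pos (G : CsmGmm K) (h : Fin K → Fin 3) (w : Fin K → ℝ) : 0 < tsum G h w := by
  have : Nonempty (Fin (G.M (pat h))) := ⟨⟨0, G.M_pos _⟩⟩
  exact Finset.sum_pos
    (fun m _ => mul_pos (G.pi_pos _ m) (Finset.prod_pos fun k _ => stdNormal_pos _))
    Finset.univ_nonempty

lemma Abar_pos (G : CsmGmm K) (w : Fin K → ℝ) : 0 < Abar G w :=
  mul_pos (G.pi_pos _ _) (add_pos (termP_pos _ _) (termP_pos _ _))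

lemma S_nonempty (hK : 1 ≤ K) : (S K).Nonempty := by
  refine ⟨fun _ => 1, ?_⟩
  simp only [S, Finset.mem_filter, Finset.mem_univ, true_and]
  constructor
  · intro e
    have := congrFun e ⟨0, by omega⟩
    simp at this
  · intro e
    have := congrFun e ⟨0, by omega⟩
    simp at this

lemma Nrep_pos (hK : 1 ≤ K) (G : CsmGmm K) (z : Fin K → ℝ) : 0 < G.Nrep z := by
  rw [Nrep_eq]
  exact Finset.sum_pos (fun h _ => tsum_pos G h z) (S_nonempty hK)

/-! ### evaluating the two extreme configurations -/

lemma fin_unique {G : CsmGmm K} (hM1 : G.M (fun _ => true) = 1)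
    (m m' : Fin (G.M (fun _ => true))) : m = m' := by
  have h1 := m.isLt; have h2 := m'.isLt
  exact Fin.ext (by omega)

lemma sum_fin_one {G : CsmGmm K} (hM1 : G.M (fun _ => true) = 1)
    (f : Fin (G.M (fun _ => true)) → ℝ) :
    ∑ m, f m = f (mbar G) := by
  rw [Finset.sum_eq_single_of_mem (mbar G) (Finset.mem_univ _)]
  intro b _ hb
  exact absurd (fin_unique hM1 b (mbar G)) hb

lemma tsum_c2 (G : CsmGmm K) (hM1 : G.M (fun _ => true) = 1) (z : Fin K → ℝ) :
    tsum G (fun _ => 2) z = pibar G * termP z (mubar G) := by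
  unfold tsum
  have hp : pat (fun _ : Fin K => (2:Fin 3)) = fun _ => true := rfl
  rw [hp, sum_fin_one hM1]
  unfold pibar termP mubar
  congr 1
  refine Finset.prod_congr rfl fun k _ => ?_
  rw [sgnVal_two, one_mul]

lemma tsum_c0 (G : CsmGmm K) (hM1 : G.M (fun _ => true) = 1) (z : Fin K → ℝ) :
    tsum G (fun _ => 0) z = pibar G * termP z (fun k => -(mubar G k)) := by
  unfold tsum
  have hp : pat (fun _ : Fin K => (0:Fin 3)) = fun _ => true := rfl
  rw [hp, sum_fin_one hM1]
  unfold pibar termP mubar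
  congr 1
  refine Finset.prod_congr rfl fun k _ => ?_
  rw [sgnVal_zero]; ring_nf

lemma c2_ne_c0 (hK : 1 ≤ K) : (fun _ : Fin K => (2:Fin 3)) ≠ (fun _ => 0) := by
  intro e
  have := congrFun e ⟨0, by omega⟩
  simp at this

lemma D_split (hK : 1 ≤ K) (G : CsmGmm K) (hM1 : G.M (fun _ => true) = 1)
    (z : Fin K → ℝ) : G.D z = G.Nrep z + Abar G z := by
  rw [D_eq, Nrep_eq]
  rw [← Finset.sum_filter_add_sum_filter_not Finset.univ
      (fun h : Fin K → Fin 3 => h ≠ (fun _ => 2) ∧ h ≠ (fun _ => 0)) (fun h => tsum G h z)]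
  congr 1
  have hset : Finset.univ.filter
      (fun h : Fin K → Fin 3 => ¬(h ≠ (fun _ => 2) ∧ h ≠ (fun _ => 0)))
      = {(fun _ => 2), (fun _ => 0)} := by
    ext h
    simp only [Finset.mem_filter, Finset.mem_univ, true_and, Finset.mem_insert,
      Finset.mem_singleton, not_and_or, not_not]
  rw [hset, Finset.sum_pair (c2_ne_c0 hK), tsum_c2 G hM1, tsum_c0 G hM1, Abar]
  ring

/-! ### reindexing by sign flip -/

lemma negh_mem {h : Fin K → Fin 3} (hh : h ∈ S K) : negh h ∈ S K := by
  simp only [S, Finset.mem_filter, Finset.mem_univ, true_and] at hh ⊢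
  have key : ∀ i : Fin 3, ((2:Fin 3) - i = 2 → i = 0) ∧ ((2:Fin 3) - i = 0 → i = 2) := by decide
  constructor
  · intro e
    exact hh.2 (funext fun k => (key (h k)).1 (congrFun e k))
  · intro e
    exact hh.1 (funext fun k => (key (h k)).2 (congrFun e k))

lemma sum_negh (f : (Fin K → Fin 3) → ℝ) :
    ∑ h ∈ S K, f (negh h) = ∑ h ∈ S K, f h :=
  Finset.sum_nbij' negh negh (fun h hh => negh_mem hh) (fun h hh => negh_mem hh)
    (fun h _ => negh_invol h) (fun h _ => negh_invol h) (fun h _ => rfl)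

lemma tsum_apply (G : CsmGmm K) (h : Fin K → Fin 3) (w : Fin K → ℝ) :
    tsum G h w = ∑ m : Fin (G.M (pat h)),
      G.pi (pat h) m * termP w (fun k => sgnVal (h k) * G.mu (pat h) m k) := rfl

lemma tsum_negh (G : CsmGmm K) (h : Fin K → Fin 3) (w : Fin K → ℝ) :
    tsum G (negh h) w = ∑ m : Fin (G.M (pat h)),
      G.pi (pat h) m * termP w (fun k => -(sgnVal (h k) * G.mu (pat h) m k)) := by
  unfold tsum
  rw [pat_negh]
  refine Finset.sum_congr rfl fun m _ => ?_
  congr 1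
  unfold termP
  refine Finset.prod_congr rfl fun k _ => ?_
  have : sgnVal (negh h k) = - sgnVal (h k) := sgnVal_neg (h k)
  rw [this, neg_mul]

end RcsmAux
end

noncomputable section
namespace RcsmAux

open Finset

variable {K : ℕ}

/-! ### exponential form -/

lemma termP_exp (w c : Fin K → ℝ) :
    termP w c = (∏ k, stdNormal (w k)) * Real.exp (∑ k, (c k * w k - c k ^ 2 / 2)) := by
  rw [termP, Real.exp_sum, ← Finset.prod_mul_distrib]
  refine Finset.prod_congr rfl fun k _ => ?_
  unfold stdNormal
  rw [mul_assoc, ← Real.exp_add]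
  congr 1
  ring

lemma pair_exp (u e : Fin K → ℝ) :
    termP u e + termP u (fun k => -(e k)) =
      (∏ k, stdNormal (u k)) * Real.exp (-∑ k, e k ^ 2 / 2) *
        (2 * Real.cosh (∑ k, e k * u k)) := by
  rw [termP_exp, termP_exp, Real.cosh_eq]
  have h1 : (∑ k, (e k * u k - e k ^ 2 / 2))
      = (∑ k, e k * u k) + (-∑ k, e k ^ 2 / 2) := by
    rw [Finset.sum_sub_distrib]; ring
  have h2 : (∑ k, ((fun k => -(e k)) k * u k - ((fun k => -(e k)) k) ^ 2 / 2))
      = (-(∑ k, e k * u k)) + (-∑ k, e k ^ 2 / 2) := by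
    calc (∑ k, ((fun k => -(e k)) k * u k - ((fun k => -(e k)) k) ^ 2 / 2))
        = ∑ k, (-(e k * u k) - e k ^ 2 / 2) :=
          Finset.sum_congr rfl fun k _ => by ring
      _ = (∑ k, -(e k * u k)) - ∑ k, e k ^ 2 / 2 := Finset.sum_sub_distrib _ _
      _ = (-(∑ k, e k * u k)) + (-∑ k, e k ^ 2 / 2) := by
          rw [Finset.sum_neg_distrib]; ring
  rw [h1, h2, Real.exp_add, Real.exp_add]
  ring

/-! ### the core cosh inequality -/

lemma core {a a' v v' : ℝ} (h1 : |a'| ≤ v') (h2 : |a - a'| ≤ v - v') :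
    Real.cosh a * Real.cosh v' ≤ Real.cosh a' * Real.cosh v := by
  have hv' : 0 ≤ v' := (abs_nonneg a').trans h1
  have hvv' : v' ≤ v := by have := (abs_nonneg (a - a')).trans h2; linarith
  rw [abs_le] at h1 h2
  have e1 : Real.cosh (a + v') ≤ Real.cosh (a' + v) := by
    apply Real.cosh_le_cosh.mpr
    rw [abs_of_nonneg (by linarith : (0:ℝ) ≤ a' + v), abs_le]
    constructor <;> linarith
  have e2 : Real.cosh (a - v') ≤ Real.cosh (a' - v) := by
    apply Real.cosh_le_cosh.mpr
    rw [abs_sub_comm a' v, abs_of_nonneg (by linarith : (0:ℝ) ≤ v - a'), abs_le]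
    constructor <;> linarith
  have i1 : Real.cosh (a + v') + Real.cosh (a - v')
      = 2 * (Real.cosh a * Real.cosh v') := by
    rw [Real.cosh_add, Real.cosh_sub]; ring
  have i2 : Real.cosh (a' + v) + Real.cosh (a' - v)
      = 2 * (Real.cosh a' * Real.cosh v) := by
    rw [Real.cosh_add, Real.cosh_sub]; ring
  linarith

/-! ### the pairwise inequality -/

lemma pair_ineq (c d w w' : Fin K → ℝ) (hcd : ∀ k, |c k| ≤ d k)
    (hsign : (∀ k, 0 < w' k ∧ w' k ≤ w k) ∨ (∀ k, w k ≤ w' k ∧ w' k < 0)) :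
    (termP w c + termP w (fun k => -(c k))) * (termP w' d + termP w' (fun k => -(d k))) ≤
    (termP w' c + termP w' (fun k => -(c k))) * (termP w d + termP w (fun k => -(d k))) := by
  rw [pair_exp w c, pair_exp w' c, pair_exp w d, pair_exp w' d]
  set C1 : ℝ := ∏ k, stdNormal (w k) with hC1
  set C2 : ℝ := ∏ k, stdNormal (w' k) with hC2
  set E1 : ℝ := Real.exp (-∑ k, c k ^ 2 / 2) with hE1
  set E2 : ℝ := Real.exp (-∑ k, d k ^ 2 / 2) with hE2
  set a : ℝ := ∑ k, c k * w k with ha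
  set a' : ℝ := ∑ k, c k * w' k with ha'
  set v : ℝ := ∑ k, d k * w k with hv
  set v' : ℝ := ∑ k, d k * w' k with hv'
  have hd : ∀ k, 0 ≤ d k := fun k => (abs_nonneg (c k)).trans (hcd k)
  have key : Real.cosh a * Real.cosh v' ≤ Real.cosh a' * Real.cosh v := by
    have hdiff : a - a' = ∑ k, c k * (w k - w' k) := by
      rw [ha, ha', ← Finset.sum_sub_distrib]
      exact Finset.sum_congr rfl fun k _ => by ring
    have hvdiff : v - v' = ∑ k, d k * (w k - w' k) := by
      rw [hv, hv', ← Finset.sum_sub_distrib]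
      exact Finset.sum_congr rfl fun k _ => by ring
    rcases hsign with hs | hs
    · refine core ?_ ?_
      · refine (Finset.abs_sum_le_sum_abs _ _).trans ?_
        refine Finset.sum_le_sum fun k _ => ?_
        rw [abs_mul, abs_of_pos (hs k).1]
        exact mul_le_mul_of_nonneg_right (hcd k) (hs k).1.le
      · rw [hdiff, hvdiff]
        refine (Finset.abs_sum_le_sum_abs _ _).trans (Finset.sum_le_sum fun k _ => ?_)
        have hwk : 0 ≤ w k - w' k := by linarith [(hs k).2]
        rw [abs_mul, abs_of_nonneg hwk]
        exact mul_le_mul_of_nonneg_right (hcd k) hwk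
    · have h1 : |a'| ≤ -v' := by
        have hval : -v' = ∑ k, d k * (-(w' k)) := by
          rw [hv', ← Finset.sum_neg_distrib]
          exact Finset.sum_congr rfl fun k _ => by ring
        rw [hval]
        refine (Finset.abs_sum_le_sum_abs _ _).trans (Finset.sum_le_sum fun k _ => ?_)
        rw [abs_mul, abs_of_neg (hs k).2]
        exact mul_le_mul_of_nonneg_right (hcd k) (by linarith [(hs k).2])
      have h2 : |a - a'| ≤ -v - -v' := by
        have heq : (∑ k, d k * (w' k - w k)) = -v - -v' := by
          rw [hv, hv']
          rw [show (∑ k, d k * (w' k - w k)) = ∑ k, (d k * w' k - d k * w k) from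
            Finset.sum_congr rfl fun k _ => by ring, Finset.sum_sub_distrib]
          ring
        rw [hdiff, ← heq]
        refine (Finset.abs_sum_le_sum_abs _ _).trans (Finset.sum_le_sum fun k _ => ?_)
        have hwk : 0 ≤ w' k - w k := by linarith [(hs k).1]
        rw [abs_mul, show |w k - w' k| = w' k - w k by rw [abs_sub_comm, abs_of_nonneg hwk]]
        exact mul_le_mul_of_nonneg_right (hcd k) hwk
      have hc := core h1 h2
      rwa [Real.cosh_neg, Real.cosh_neg] at hc
  calc C1 * E1 * (2 * Real.cosh a) * (C2 * E2 * (2 * Real.cosh v'))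
      = 4 * (C1 * C2 * (E1 * E2)) * (Real.cosh a * Real.cosh v') := by ring
    _ ≤ 4 * (C1 * C2 * (E1 * E2)) * (Real.cosh a' * Real.cosh v) := by
        refine mul_le_mul_of_nonneg_left key ?_
        have p1 : 0 < C1 := by
          rw [hC1]; exact Finset.prod_pos fun k _ => stdNormal_pos _
        have p2 : 0 < C2 := by
          rw [hC2]; exact Finset.prod_pos fun k _ => stdNormal_pos _
        have p3 : 0 < E1 := by rw [hE1]; exact Real.exp_pos _
        have p4 : 0 < E2 := by rw [hE2]; exact Real.exp_pos _
        nlinarith [mul_pos (mul_pos p1 p2) (mul_pos p3 p4)]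
    _ = C2 * E1 * (2 * Real.cosh a') * (C1 * E2 * (2 * Real.cosh v)) := by ring

end RcsmAux
end

noncomputable section
namespace RcsmAux

open Finset

variable {K : ℕ}

lemma mu_nonneg (G : CsmGmm K) (β : Fin K → Bool) (m : Fin (G.M β)) (k : Fin K) :
    0 ≤ G.mu β m k := by
  by_cases hk : β k = true
  · exact (G.mu_pos β m k hk).le
  · rw [G.mu_null β m k (by simpa using hk)]

lemma mu_le (G : CsmGmm K) (hM1 : G.M (fun _ => true) = 1)
    (β : Fin K → Bool) (m : Fin (G.M β)) (k : Fin K) :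
    G.mu β m k ≤ mubar G k := by
  by_cases hb : β = fun _ => true
  · subst hb
    rw [fin_unique hM1 m (mbar G)]
    exact le_refl _
  · by_cases hk : β k = true
    · exact G.mu_alt β m (mbar G) k hb hk
    · rw [G.mu_null β m k (by simpa using hk)]
      exact (G.mu_pos _ (mbar G) k rfl).le

lemma coeff_le (G : CsmGmm K) (hM1 : G.M (fun _ => true) = 1)
    (h : Fin K → Fin 3) (m : Fin (G.M (pat h))) (k : Fin K) :
    |sgnVal (h k) * G.mu (pat h) m k| ≤ mubar G k := by
  rw [abs_mul, abs_of_nonneg (mu_nonneg G _ m k)]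
  calc |sgnVal (h k)| * G.mu (pat h) m k ≤ 1 * G.mu (pat h) m k :=
        mul_le_mul_of_nonneg_right (abs_sgnVal (h k)) (mu_nonneg G _ m k)
    _ = G.mu (pat h) m k := one_mul _
    _ ≤ mubar G k := mu_le G hM1 (pat h) m k

lemma main_ineq (G : CsmGmm K) (hM1 : G.M (fun _ => true) = 1) (z z' : Fin K → ℝ)
    (hsign : (∀ k, 0 < z' k ∧ z' k ≤ z k) ∨ (∀ k, z k ≤ z' k ∧ z' k < 0)) :
    G.Nrep z * Abar G z' ≤ G.Nrep z' * Abar G z := by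
  rw [Nrep_eq, Nrep_eq, Finset.sum_mul, Finset.sum_mul]
  have hdouble : ∀ w w'' : Fin K → ℝ,
      (∑ h ∈ S K, tsum G h w * Abar G w'') * 2
        = ∑ h ∈ S K, (tsum G h w + tsum G (negh h) w) * Abar G w'' := by
    intro w w''
    have hcopy : ∑ h ∈ S K, tsum G h w * Abar G w''
        = ∑ h ∈ S K, tsum G (negh h) w * Abar G w'' :=
      (sum_negh (fun h => tsum G h w * Abar G w'')).symm
    calc (∑ h ∈ S K, tsum G h w * Abar G w'') * 2
        = (∑ h ∈ S K, tsum G h w * Abar G w'')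
            + ∑ h ∈ S K, tsum G (negh h) w * Abar G w'' := by
          rw [← hcopy]; ring
      _ = ∑ h ∈ S K, (tsum G h w * Abar G w'' + tsum G (negh h) w * Abar G w'') :=
          (Finset.sum_add_distrib).symm
      _ = ∑ h ∈ S K, (tsum G h w + tsum G (negh h) w) * Abar G w'' :=
          Finset.sum_congr rfl fun h _ => by ring
  have h2le : (∑ h ∈ S K, tsum G h z * Abar G z') * 2
      ≤ (∑ h ∈ S K, tsum G h z' * Abar G z) * 2 := by
    rw [hdouble z z', hdouble z' z]
    refine Finset.sum_le_sum fun h _ => ?_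
    rw [tsum_apply G h z, tsum_apply G h z', tsum_negh G h z, tsum_negh G h z']
    rw [← Finset.sum_add_distrib, ← Finset.sum_add_distrib,
      Finset.sum_mul, Finset.sum_mul]
    refine Finset.sum_le_sum fun m _ => ?_
    have hpair := pair_ineq (fun k => sgnVal (h k) * G.mu (pat h) m k) (mubar G) z z'
      (coeff_le G hM1 h m) hsign
    have hpi : 0 ≤ G.pi (pat h) m * pibar G :=
      (mul_pos (G.pi_pos _ m) (G.pi_pos _ _)).le
    calc (G.pi (pat h) m * termP z (fun k => sgnVal (h k) * G.mu (pat h) m k)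
            + G.pi (pat h) m * termP z (fun k => -(sgnVal (h k) * G.mu (pat h) m k)))
          * Abar G z'
        = (G.pi (pat h) m * pibar G)
            * ((termP z (fun k => sgnVal (h k) * G.mu (pat h) m k)
                + termP z (fun k => -(sgnVal (h k) * G.mu (pat h) m k)))
              * (termP z' (mubar G) + termP z' (fun k => -(mubar G k)))) := by
          rw [Abar]; ring
      _ ≤ (G.pi (pat h) m * pibar G)
            * ((termP z' (fun k => sgnVal (h k) * G.mu (pat h) m k)
                + termP z' (fun k => -(sgnVal (h k) * G.mu (pat h) m k)))
              * (termP z (mubar G) + termP z (fun k => -(mubar G k)))) :=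
          mul_le_mul_of_nonneg_left hpair hpi
      _ = (G.pi (pat h) m * termP z' (fun k => sgnVal (h k) * G.mu (pat h) m k)
            + G.pi (pat h) m * termP z' (fun k => -(sgnVal (h k) * G.mu (pat h) m k)))
          * Abar G z := by
          rw [Abar]; ring
  linarith

lemma lfdr_le (hK : 1 ≤ K) (G : CsmGmm K) (hM1 : G.M (fun _ => true) = 1)
    (z z' : Fin K → ℝ)
    (hsign : (∀ k, 0 < z' k ∧ z' k ≤ z k) ∨ (∀ k, z k ≤ z' k ∧ z' k < 0)) :
    G.lfdrRep z ≤ G.lfdrRep z' := by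
  rw [CsmGmm.lfdrRep, CsmGmm.lfdrRep, D_split hK G hM1, D_split hK G hM1]
  have hN := Nrep_pos hK G z
  have hN' := Nrep_pos hK G z'
  have hA := Abar_pos G z
  have hA' := Abar_pos G z'
  rw [div_le_div_iff₀ (by linarith) (by linarith)]
  have hm := main_ineq G hM1 z z' hsign
  nlinarith

end RcsmAux
end

/-- **Congruity of the r-csmGmm on same-signed vectors.** Under any r-csmGmm
(a csmGmm with `M_{2^K-1} = 1`), among vectors whose coordinates all share a
common sign, a componentwise more extreme vector never receives a strictly
larger replication lfdr. -/
theorem rcsmGmm_congruous_same_sign {K : ℕ} (hK : 2 ≤ K) (G : CsmGmm K)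
    (hM1 : G.M (fun _ => true) = 1)
    (z z' : Fin K → ℝ) :
    ((∀ k, 0 < z k) → (∀ k, 0 < z' k) → (∀ k, z' k ≤ z k) →
      G.lfdrRep z ≤ G.lfdrRep z') ∧
    ((∀ k, z k < 0) → (∀ k, z' k < 0) → (∀ k, z k ≤ z' k) →
      G.lfdrRep z ≤ G.lfdrRep z') := by
  constructor
  · intro hz hz' hle
    exact RcsmAux.lfdr_le (by omega) G hM1 z z'
      (Or.inl fun k => ⟨hz' k, hle k⟩)
  · intro hz hz' hle
    exact RcsmAux.lfdr_le (by omega) G hM1 z z'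
      (Or.inr fun k => ⟨hle k, hz' k⟩)
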